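/- Let ρ_{AB} = ∑_x p_x |x⟩⟨x| ⊗ ρ_x be a cq-state with ρ = ∑_x p_x ρ_x invertible, and define the conditional collision entropy H_2(ρ_{AB}|ρ) = -log₂ Tr([(I ⊗ ρ^{-1/2})ρ_{AB}]²). Then the maximal average probability of guessing x from ρ_x satisfies sup_M ∑_x p_x Tr(M_x ρ_x) ≥ 2^{-H_2(ρ_{AB}|ρ)}, where the supremum is over POVMs {M_x}; the bound is achieved by the square-root (pretty good) measurement M_x = p_x ρ^{-1/2} ρ_x ρ^{-1/2}. -/

import Mathlib

open scoped ComplexOrder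
open Matrix
set_option linter.unusedSectionVars false
variable {n : Type*} [Fintype n] [DecidableEq n]
noncomputable def psdSqrt {A : Matrix n n ℂ} (hA : A.PosSemidef) : Matrix n n ℂ :=
  (hA.1.eigenvectorUnitary : Matrix n n ℂ) *
    Matrix.diagonal (fun i => ((Real.sqrt (hA.1.eigenvalues i) : ℝ) : ℂ)) *
    (star hA.1.eigenvectorUnitary : Matrix n n ℂ)

lemma psdSqrt_mul_self {A : Matrix n n ℂ} (hA : A.PosSemidef) : psdSqrt hA * psdSqrt hA = A := by
  have h := hA.1.spectral_theorem
  rw [Unitary.conjStarAlgAut_apply] at h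
  conv_rhs => rw [h]
  have hU : (star hA.1.eigenvectorUnitary : Matrix n n ℂ) *
      (hA.1.eigenvectorUnitary : Matrix n n ℂ) = 1 := Unitary.coe_star_mul_self _
  unfold psdSqrt
  rw [show ∀ U D V : Matrix n n ℂ, U * D * V * (U * D * V) = U * (D * (V * U) * D) * V by
    intros; noncomm_ring, hU, mul_one, diagonal_mul_diagonal]
  congr 3
  funext i
  simp only [Function.comp_apply]
  rw [← Complex.ofReal_mul, Real.mul_self_sqrt (hA.eigenvalues_nonneg i)]
  rfl

lemma posSemidef_psdSqrt {A : Matrix n n ℂ} (hA : A.PosSemidef) : (psdSqrt hA).PosSemidef := by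
  have hD : (Matrix.diagonal (fun i => ((Real.sqrt (hA.1.eigenvalues i) : ℝ) : ℂ))).PosSemidef :=
    PosSemidef.diagonal fun i => by simp
  have := hD.conjTranspose_mul_mul_same (star hA.1.eigenvectorUnitary : Matrix n n ℂ)
  unfold psdSqrt
  simpa [star_eq_conjTranspose] using this

lemma frob_eq (A : Matrix n n ℂ) :
    (Aᴴ * A).trace.re = ∑ j, ∑ i, Complex.normSq (A i j) := by
  simp [Matrix.trace, Matrix.mul_apply, Matrix.diag, Matrix.conjTranspose_apply,
    Complex.re_sum, Complex.normSq_eq_conj_mul_self, Complex.normSq_apply]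

lemma frob_nonneg (A : Matrix n n ℂ) : 0 ≤ (Aᴴ * A).trace.re := by
  rw [frob_eq]
  exact Finset.sum_nonneg fun j _ => Finset.sum_nonneg fun i _ => Complex.normSq_nonneg _

lemma frob_pos {A : Matrix n n ℂ} (h : A ≠ 0) : 0 < (Aᴴ * A).trace.re := by
  rw [frob_eq]
  obtain ⟨i, j, hij⟩ : ∃ i j, A i j ≠ 0 := by
    by_contra hc
    push_neg at hc
    exact h (Matrix.ext fun i j => hc i j)
  refine Finset.sum_pos' (fun j _ => Finset.sum_nonneg fun i _ => Complex.normSq_nonneg _) ?_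
  refine ⟨j, Finset.mem_univ _, Finset.sum_pos' (fun i _ => Complex.normSq_nonneg _)
    ⟨i, Finset.mem_univ _, ?_⟩⟩
  simpa [Complex.normSq_pos] using hij

lemma smul_psd {c : ℝ} (hc : 0 ≤ c) {M : Matrix n n ℂ} (hM : M.PosSemidef) :
    ((c : ℂ) • M).PosSemidef := by
  exact hM.smul (by exact_mod_cast hc)

lemma trace_mul_psd_re_nonneg {B C : Matrix n n ℂ} (hB : B.PosSemidef) (hC : C.PosSemidef) :
    0 ≤ ((B * C).trace).re := by
  have h1 : B * C = (psdSqrt hB) * ((psdSqrt hB) * ((psdSqrt hC) * (psdSqrt hC))) := by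
    rw [(psdSqrt_mul_self hC), ← mul_assoc, (psdSqrt_mul_self hB)]
  have h2 : (B * C).trace = (((psdSqrt hC) * (psdSqrt hB))ᴴ * ((psdSqrt hC) * (psdSqrt hB))).trace := by
    rw [h1, Matrix.trace_mul_comm]
    refine congrArg Matrix.trace ?_
    rw [Matrix.conjTranspose_mul, (posSemidef_psdSqrt hB).1, (posSemidef_psdSqrt hC).1]
    noncomm_ring
  rw [h2]
  exact frob_nonneg _

set_option maxHeartbeats 1000000

/-- Pretty-good-measurement bound: for a cq-state `ρ_XE = ∑_x p_x |x⟩⟨x| ⊗ ρ_x`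
(represented as the block-diagonal matrix with blocks `p_x ρ_x`) with
`ρ = ∑_x p_x ρ_x` invertible, define the conditional collision entropy
`H₂(ρ_XE|ρ) = -log₂ Tr([(I ⊗ ρ^{-1/2}) ρ_XE]²)`.  Then the square-root (pretty good)
measurement `M_x = p_x ρ^{-1/2} ρ_x ρ^{-1/2}` is a POVM whose average success probability
equals `2^{-H₂}`, and hence the maximal average guessing probability over all POVMs is
at least `2^{-H₂}`. -/
theorem stmt_19 {d m : ℕ}
    (p : Fin m → ℝ) (hp : ∀ x, 0 ≤ p x) (hp1 : ∑ x, p x = 1)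
    (ρ : Fin m → Matrix (Fin d) (Fin d) ℂ)
    (hρ : ∀ x, (ρ x).PosSemidef ∧ (ρ x).trace = 1)
    (hpsd : (∑ x, (p x : ℂ) • ρ x).PosSemidef)
    (hinv : IsUnit (∑ x, (p x : ℂ) • ρ x))
    (R : Matrix (Fin d) (Fin d) ℂ) (hR : R = ((hpsd.1.eigenvectorUnitary : Matrix (Fin d) (Fin d) ℂ) *
      Matrix.diagonal (fun i => ((Real.sqrt (hpsd.1.eigenvalues i) : ℝ) : ℂ)) *
      (star hpsd.1.eigenvectorUnitary : Matrix (Fin d) (Fin d) ℂ))⁻¹)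
    (H₂ : ℝ)
    (hH₂ : H₂ = -Real.logb 2
      ((((Matrix.blockDiagonal fun _ : Fin m => R) *
          (Matrix.blockDiagonal fun x : Fin m => (p x : ℂ) • ρ x)) ^ 2).trace.re)) :
    (∀ x, ((p x : ℂ) • (R * ρ x * R)).PosSemidef) ∧
    (∑ x, (p x : ℂ) • (R * ρ x * R) = 1) ∧
    (∑ x, p x * ((((p x : ℂ) • (R * ρ x * R)) * ρ x).trace).re = (2 : ℝ) ^ (-H₂)) ∧
    sSup {v : ℝ | ∃ M : Fin m → Matrix (Fin d) (Fin d) ℂ,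
        (∀ x, (M x).PosSemidef) ∧ (∑ x, M x = 1) ∧
        v = ∑ x, p x * ((M x * ρ x).trace).re}
      ≥ (2 : ℝ) ^ (-H₂) := by
  set S : Matrix (Fin d) (Fin d) ℂ := ∑ x, (p x : ℂ) • ρ x with hS
  obtain ⟨A, hAA, hRinv⟩ : ∃ A : Matrix (Fin d) (Fin d) ℂ, A * A = S ∧ R = A⁻¹ :=
    ⟨(psdSqrt hpsd), (psdSqrt_mul_self hpsd), hR⟩
  have hAdet : IsUnit A.det := by
    have h1 : IsUnit S.det := (Matrix.isUnit_iff_isUnit_det S).mp hinv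
    rw [← hAA, Matrix.det_mul] at h1
    exact isUnit_of_mul_isUnit_left h1
  have hRA : R * A = 1 := by rw [hRinv]; exact Matrix.nonsing_inv_mul A hAdet
  have hAR : A * R = 1 := by rw [hRinv]; exact Matrix.mul_nonsing_inv A hAdet
  have hRpsd : R.PosSemidef := by rw [hR]; exact (posSemidef_psdSqrt hpsd).inv
  have hRH : Rᴴ = R := hRpsd.1
  -- Part 1
  have part1 : ∀ x, ((p x : ℂ) • (R * ρ x * R)).PosSemidef := by
    intro x
    refine smul_psd (hp x) ?_
    have := (hρ x).1.conjTranspose_mul_mul_same (B := R)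
    rwa [hRH] at this
  -- Part 2
  have part2 : ∑ x, (p x : ℂ) • (R * ρ x * R) = 1 := by
    have h1 : ∀ x : Fin m, (p x : ℂ) • (R * ρ x * R) = R * ((p x : ℂ) • ρ x) * R := by
      intro x
      rw [mul_smul_comm, smul_mul_assoc]
    simp_rw [h1]
    rw [← Finset.sum_mul, ← Finset.mul_sum, ← hS, ← hAA,
      show R * (A * A) * R = (R * A) * (A * R) by noncomm_ring, hRA, hAR, one_mul]
  -- trace positivity machinery
  obtain ⟨C, hCC, hCH⟩ : ∃ C : Matrix (Fin d) (Fin d) ℂ, C * C = R ∧ Cᴴ = C :=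
    ⟨(psdSqrt hRpsd), (psdSqrt_mul_self hRpsd), (posSemidef_psdSqrt hRpsd).1⟩
  have hZform : ∀ x : Fin m, (R * ρ x * R * ρ x).trace =
      ((C * ρ x * C)ᴴ * (C * ρ x * C)).trace := by
    intro x
    have hρH : (ρ x)ᴴ = ρ x := (hρ x).1.1
    have hZH : (C * ρ x * C)ᴴ = C * ρ x * C := by
      simp [Matrix.conjTranspose_mul, hCH, hρH, mul_assoc]
    rw [hZH]
    have key : R * ρ x * R * ρ x = C * (C * ρ x * (C * C) * ρ x) := by
      rw [← hCC]; noncomm_ring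
    rw [key, Matrix.trace_mul_comm]
    congr 1
    noncomm_ring
  have tnonneg : ∀ x : Fin m, 0 ≤ (R * ρ x * R * ρ x).trace.re := by
    intro x
    rw [hZform x]
    exact frob_nonneg _
  have tpos : ∀ x : Fin m, 0 < (R * ρ x * R * ρ x).trace.re := by
    intro x
    rw [hZform x]
    refine frob_pos ?_
    intro hZ0
    obtain ⟨Q, hQQ, hQH⟩ : ∃ Q : Matrix (Fin d) (Fin d) ℂ, Q * Q = ρ x ∧ Qᴴ = Q :=
      ⟨(psdSqrt (hρ x).1), (psdSqrt_mul_self (hρ x).1), (posSemidef_psdSqrt (hρ x).1).1⟩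
    have hZ' : (Q * C)ᴴ * (Q * C) = 0 := by
      rw [Matrix.conjTranspose_mul, hQH, hCH]
      calc C * Q * (Q * C) = C * (Q * Q) * C := by noncomm_ring
        _ = C * ρ x * C := by rw [hQQ]
        _ = 0 := hZ0
    have hQC : Q * C = 0 := Matrix.conjTranspose_mul_self_eq_zero.mp hZ'
    have hρC : ρ x * C = 0 := by
      calc ρ x * C = Q * (Q * C) := by rw [← hQQ]; noncomm_ring
        _ = 0 := by rw [hQC, mul_zero]
    have hρR : ρ x * R = 0 := by
      calc ρ x * R = (ρ x * C) * C := by rw [← hCC]; noncomm_ring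
        _ = 0 := by rw [hρC, zero_mul]
    have hρ0 : ρ x = 0 := by
      calc ρ x = ρ x * (R * A) := by rw [hRA, mul_one]
        _ = (ρ x * R) * A := by noncomm_ring
        _ = 0 := by rw [hρR, zero_mul]
    have := (hρ x).2
    rw [hρ0] at this
    simp at this
  -- trace of block diagonal square
  have hT : (((Matrix.blockDiagonal fun _ : Fin m => R) *
      (Matrix.blockDiagonal fun x : Fin m => (p x : ℂ) • ρ x)) ^ 2).trace.re
      = ∑ x, (p x) ^ 2 * (R * ρ x * R * ρ x).trace.re := by
    rw [← Matrix.blockDiagonal_mul, ← Matrix.blockDiagonal_pow, Matrix.trace_blockDiagonal,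
      Complex.re_sum]
    refine Finset.sum_congr rfl fun x _ => ?_
    have h1 : ((fun x : Fin m => R * ((p x : ℂ) • ρ x)) ^ 2) x
        = ((p x : ℂ) * (p x : ℂ)) • (R * ρ x * R * ρ x) := by
      simp only [Pi.pow_apply, pow_two, mul_smul_comm, smul_mul_assoc, smul_smul, mul_assoc]
    rw [h1, Matrix.trace_smul, smul_eq_mul, ← Complex.ofReal_mul, Complex.re_ofReal_mul]
    ring
  have hsum_eq : ∑ x, p x * ((((p x : ℂ) • (R * ρ x * R)) * ρ x).trace).re
      = ∑ x, (p x) ^ 2 * (R * ρ x * R * ρ x).trace.re := by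
    refine Finset.sum_congr rfl fun x _ => ?_
    rw [Matrix.smul_mul, Matrix.trace_smul, smul_eq_mul, Complex.re_ofReal_mul]
    ring
  have Tpos : 0 < ∑ x, (p x) ^ 2 * (R * ρ x * R * ρ x).trace.re := by
    obtain ⟨x₀, hx₀⟩ : ∃ x, p x ≠ 0 := by
      by_contra hc
      push_neg at hc
      rw [Finset.sum_congr rfl fun x _ => hc x] at hp1
      simp at hp1
    refine Finset.sum_pos' (fun x _ => mul_nonneg (sq_nonneg _) (tnonneg x)) ⟨x₀,
      Finset.mem_univ _, mul_pos (by positivity) (tpos x₀)⟩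
  have hpow : (2 : ℝ) ^ (-H₂) = ∑ x, (p x) ^ 2 * (R * ρ x * R * ρ x).trace.re := by
    rw [hH₂, neg_neg, hT, Real.rpow_logb (by norm_num) (by norm_num) Tpos]
  have part3 : ∑ x, p x * ((((p x : ℂ) • (R * ρ x * R)) * ρ x).trace).re = (2 : ℝ) ^ (-H₂) := by
    rw [hsum_eq, hpow]
  refine ⟨part1, part2, part3, ?_⟩
  -- Part 4
  have hbdd : BddAbove {v : ℝ | ∃ M : Fin m → Matrix (Fin d) (Fin d) ℂ,
      (∀ x, (M x).PosSemidef) ∧ (∑ x, M x = 1) ∧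
      v = ∑ x, p x * ((M x * ρ x).trace).re} := by
    refine ⟨1, fun v hv => ?_⟩
    obtain ⟨M, hMpsd, hMsum, hveq⟩ := hv
    have hle : ∀ x : Fin m, ((M x * ρ x).trace).re ≤ 1 := by
      intro x
      have h1M : (1 - M x).PosSemidef := by
        have : (1 : Matrix (Fin d) (Fin d) ℂ) - M x = ∑ y ∈ Finset.univ.erase x, M y := by
          rw [Finset.sum_erase_eq_sub (Finset.mem_univ x), hMsum]
        rw [this]
        exact Finset.sum_induction _ _ (fun a b ha hb => ha.add hb) Matrix.PosSemidef.zero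
          (fun y _ => hMpsd y)
      have h2 := trace_mul_psd_re_nonneg h1M (hρ x).1
      rw [Matrix.sub_mul, Matrix.one_mul, Matrix.trace_sub, Complex.sub_re, (hρ x).2] at h2
      simpa using h2
    rw [hveq]
    calc ∑ x, p x * ((M x * ρ x).trace).re ≤ ∑ x, p x * 1 :=
          Finset.sum_le_sum fun x _ => mul_le_mul_of_nonneg_left (hle x) (hp x)
      _ = 1 := by simp [hp1]
  have hmem : (2 : ℝ) ^ (-H₂) ∈ {v : ℝ | ∃ M : Fin m → Matrix (Fin d) (Fin d) ℂ,
      (∀ x, (M x).PosSemidef) ∧ (∑ x, M x = 1) ∧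
      v = ∑ x, p x * ((M x * ρ x).trace).re} :=
    ⟨fun x => (p x : ℂ) • (R * ρ x * R), part1, part2, part3.symm⟩
  exact le_csSup hbdd hmem
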